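/- Let m ≥ 1, let T⁽¹⁾ and T⁽²⁾ be distinct m-bit templates, and let M satisfy L := M−m+1 ≥ m. For d with 1 ≤ d ≤ m−1 define e_d = 1 if T⁽¹⁾(i) = T⁽²⁾(i+d) for all i < m−d and e_d = 0 otherwise, and define e_{−d} = 1 if T⁽¹⁾(i+d) = T⁽²⁾(i) for all i < m−d and e_{−d} = 0 otherwise. Let c⁽¹⁾ and c⁽²⁾ be the occurrence counts of T⁽¹⁾ and T⁽²⁾ in a block B drawn uniformly at random from the 2^M equiprobable M-bit blocks. Then Cov(c⁽¹⁾, c⁽²⁾) = Σ_{d=1}^{m−1} (L−d)(e_d + e_{−d})/2^{m+d} + ((L−m)(L−m+1) − L²)/2^{2m}. -/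

import Mathlib

open scoped Classical

/-- `T` occurs in the block `B` at position `k`: `B (k+i) = T i` for all `i < m`. -/
def occursAt {m M : ℕ} (T : Fin m → Bool) (B : Fin M → Bool) (k : ℕ) : Prop :=
  ∀ i : Fin m, ∀ h : k + i.1 < M, B ⟨k + i.1, h⟩ = T i

/-- The number of occurrences of the template `T` in the block `B`. -/
noncomputable def occCount {m M : ℕ} (T : Fin m → Bool) (B : Fin M → Bool) : ℕ :=
  ((Finset.range (M + 1 - m)).filter (fun k => occursAt T B k)).card

/-- Expectation of `f` when the block is drawn uniformly from the `2^M` `M`-bit blocks. -/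
noncomputable def unifExp (M : ℕ) (f : (Fin M → Bool) → ℝ) : ℝ :=
  (∑ B : Fin M → Bool, f B) / 2 ^ M

/-- `e_d` for `d ≥ 1`: equals `1` if `T¹(i) = T²(i+d)` for all `i < m - d`, else `0`. -/
noncomputable def ePlus {m : ℕ} (T1 T2 : Fin m → Bool) (d : ℕ) : ℝ :=
  if ∀ i : ℕ, ∀ h : i < m - d, T1 ⟨i, by omega⟩ = T2 ⟨i + d, by omega⟩ then 1 else 0

/-- `e_{-d}` for `d ≥ 1`: equals `1` if `T¹(i+d) = T²(i)` for all `i < m - d`, else `0`. -/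
noncomputable def eMinus {m : ℕ} (T1 T2 : Fin m → Bool) (d : ℕ) : ℝ :=
  if ∀ i : ℕ, ∀ h : i < m - d, T1 ⟨i + d, by omega⟩ = T2 ⟨i, by omega⟩ then 1 else 0

namespace NistCov

lemma card_pi_subtype {M : ℕ} (Q : ℕ → Bool → Prop) :
    Nat.card {B : Fin M → Bool // ∀ j : Fin M, Q j.1 (B j)}
      = ∏ j ∈ Finset.range M, Nat.card {b : Bool // Q j b} := by
  rw [← Fin.prod_univ_eq_prod_range (fun j => Nat.card {b : Bool // Q j b}) M,
    ← Nat.card_pi]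
  exact Nat.card_congr (Equiv.subtypePiEquivPi)

lemma cardBool_of_true {Q : Bool → Prop} (h : ∀ b, Q b) :
    Nat.card {b : Bool // Q b} = 2 := by
  rw [Nat.card_eq_fintype_card, Fintype.card_subtype]
  have : Finset.univ.filter Q = Finset.univ := by
    ext b; simp [h b]
  rw [this]; simp

lemma cardBool_of_eq {Q : Bool → Prop} (v : Bool) (h : ∀ b, Q b ↔ b = v) :
    Nat.card {b : Bool // Q b} = 1 := by
  rw [Nat.card_eq_fintype_card, Fintype.card_subtype]
  have : Finset.univ.filter Q = {v} := by
    ext b; simp [h b]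
  rw [this]; simp

lemma cardBool_of_false {Q : Bool → Prop} (h : ∀ b, ¬ Q b) :
    Nat.card {b : Bool // Q b} = 0 := by
  rw [Nat.card_eq_fintype_card, Fintype.card_subtype]
  have : Finset.univ.filter Q = ∅ := by
    ext b; simp [h b]
  rw [this]; simp

lemma sum_ind {M : ℕ} (P : (Fin M → Bool) → Prop) [DecidablePred P] :
    (∑ B : Fin M → Bool, if P B then (1:ℝ) else 0)
      = Nat.card {B : Fin M → Bool // P B} := by
  rw [Nat.card_eq_fintype_card, Fintype.card_subtype, Finset.sum_boole]

lemma occursAt_iff {m M : ℕ} (T : Fin m → Bool) (B : Fin M → Bool) (k : ℕ)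
    (hk : k + m ≤ M) :
    occursAt T B k ↔ ∀ j : Fin M, ∀ i : Fin m, j.1 = k + i.1 → B j = T i := by
  constructor
  · intro h j i hj
    have h2 : k + i.1 < M := by have := i.2; omega
    have : j = ⟨k + i.1, h2⟩ := Fin.ext hj
    rw [this]; exact h i h2
  · intro h i hi
    exact h ⟨k + i.1, hi⟩ i rfl

/-- window constraint at position `t` for template `T` placed at `k`. -/
def W {m : ℕ} (T : Fin m → Bool) (k t : ℕ) (b : Bool) : Prop :=
  ∀ i : Fin m, t = k + i.1 → b = T i

lemma W_of_notin {m : ℕ} (T : Fin m → Bool) {k t : ℕ} (h : ¬ (k ≤ t ∧ t < k + m))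
    (b : Bool) : W T k t b := by
  intro i hi
  exact absurd hi (by have := i.2; omega)

lemma W_iff_of_mem {m : ℕ} (T : Fin m → Bool) {k t : ℕ} (h1 : k ≤ t) (h2 : t < k + m)
    (b : Bool) : W T k t b ↔ b = T ⟨t - k, by omega⟩ := by
  constructor
  · intro hw
    exact hw ⟨t - k, by omega⟩ (by simp only [Fin.val_mk]; omega)
  · intro hb i hi
    have : i = ⟨t - k, by omega⟩ := Fin.ext (by simp only [Fin.val_mk]; omega)
    rw [this]; exact hb

lemma prod_ite_one_two (M : ℕ) (P : ℕ → Prop) [DecidablePred P] (s : ℕ)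
    (hs : ((Finset.range M).filter P).card = s) :
    (∏ t ∈ Finset.range M, if P t then (1:ℕ) else 2) = 2 ^ (M - s) := by
  rw [← Finset.prod_filter_mul_prod_filter_not (Finset.range M) P]
  have h2 : ((Finset.range M).filter (fun t => ¬ P t)).card = M - s := by
    have := Finset.card_filter_add_card_filter_not (s := Finset.range M) (p := P)
    rw [Finset.card_range] at this
    omega
  have e1 : (∏ t ∈ (Finset.range M).filter P, if P t then (1:ℕ) else 2) = 1 := by
    apply Finset.prod_eq_one
    intro t ht
    rw [if_pos (Finset.mem_filter.mp ht).2]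
  have e2 : (∏ t ∈ (Finset.range M).filter (fun t => ¬ P t), if P t then (1:ℕ) else 2)
      = 2 ^ (M - s) := by
    rw [Finset.prod_congr rfl (fun t ht => if_neg (Finset.mem_filter.mp ht).2),
      Finset.prod_const, h2]
  rw [e1, e2, one_mul]

lemma singleCount {m M : ℕ} (T : Fin m → Bool) (k : ℕ) (hk : k + m ≤ M) :
    Nat.card {B : Fin M → Bool // occursAt T B k} = 2 ^ (M - m) := by
  have e1 : ∀ B : Fin M → Bool, occursAt T B k ↔ ∀ j : Fin M, W T k j.1 (B j) :=
    fun B => occursAt_iff T B k hk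
  rw [Nat.card_congr (Equiv.subtypeEquivRight e1), card_pi_subtype]
  have hg : ∀ t ∈ Finset.range M, Nat.card {b : Bool // W T k t b}
      = if k ≤ t ∧ t < k + m then 1 else 2 := by
    intro t _
    by_cases h : k ≤ t ∧ t < k + m
    · rw [if_pos h]
      exact cardBool_of_eq _ (W_iff_of_mem T h.1 h.2)
    · rw [if_neg h]
      exact cardBool_of_true (W_of_notin T h)
  rw [Finset.prod_congr rfl hg]
  apply prod_ite_one_two M _ m
  have : (Finset.range M).filter (fun t => k ≤ t ∧ t < k + m) = Finset.Ico k (k+m) := by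
    ext t
    simp only [Finset.mem_filter, Finset.mem_range, Finset.mem_Ico]
    omega
  rw [this, Nat.card_Ico]
  omega

/-- joint window constraint -/
abbrev W2 {m : ℕ} (U V : Fin m → Bool) (a l t : ℕ) (b : Bool) : Prop :=
  W U a t b ∧ W V l t b

lemma pairCount {m M : ℕ} (U V : Fin m → Bool) (a d : ℕ)
    (hUV : U ≠ V) (ha : a + d + m ≤ M) :
    Nat.card {B : Fin M → Bool // occursAt U B a ∧ occursAt V B (a + d)} =
      if d = 0 then 0
      else if d < m then
        (if ∀ i : ℕ, ∀ h : i < m - d, U ⟨i + d, by omega⟩ = V ⟨i, by omega⟩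
          then 2 ^ (M - (m + d)) else 0)
      else 2 ^ (M - 2 * m) := by
  set l := a + d with hl
  have haM : a + m ≤ M := by omega
  have hlM : l + m ≤ M := by omega
  have e1 : ∀ B : Fin M → Bool,
      (occursAt U B a ∧ occursAt V B l) ↔ ∀ j : Fin M, W2 U V a l j.1 (B j) := by
    intro B
    rw [occursAt_iff U B a haM, occursAt_iff V B l hlM, ← forall_and]
    exact Iff.rfl
  have hcard : Nat.card {B : Fin M → Bool // occursAt U B a ∧ occursAt V B l}
      = ∏ t ∈ Finset.range M, Nat.card {b : Bool // W2 U V a l t b} :=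
    (Nat.card_congr (Equiv.subtypeEquivRight e1)).trans
      (card_pi_subtype (fun t b => W2 U V a l t b))
  rw [hcard]
  by_cases hd0 : d = 0
  · -- identical positions, templates differ: count 0
    rw [if_pos hd0]
    obtain ⟨i, hi⟩ := Function.ne_iff.mp hUV
    apply Finset.prod_eq_zero (i := a + i.1) (by simp only [Finset.mem_range]; have := i.2; omega)
    apply cardBool_of_false
    rintro b ⟨h1, h2⟩
    have hb1 : b = U i := h1 i rfl
    have hb2 : b = V i := h2 i (by omega)
    exact hi (hb1 ▸ hb2)
  · by_cases hdm : d < m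
    · rw [if_neg hd0, if_pos hdm]
      by_cases hcons : ∀ i : ℕ, ∀ h : i < m - d, U ⟨i + d, by omega⟩ = V ⟨i, by omega⟩
      · rw [if_pos hcons]
        have hg : ∀ t ∈ Finset.range M,
            Nat.card {b : Bool // W2 U V a l t b}
              = if a ≤ t ∧ t < a + (m + d) then 1 else 2 := by
          intro t _
          by_cases hmem : a ≤ t ∧ t < a + (m + d)
          · rw [if_pos hmem]
            by_cases hW1 : t < a + m
            · -- in window 1
              apply cardBool_of_eq (U ⟨t - a, by omega⟩)
              intro b
              constructor
              · rintro ⟨h1, _⟩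
                exact (W_iff_of_mem U hmem.1 hW1 b).mp h1
              · intro hb
                refine ⟨(W_iff_of_mem U hmem.1 hW1 b).mpr hb, ?_⟩
                by_cases hW2 : l ≤ t
                · -- overlap: use consistency
                  refine (W_iff_of_mem V hW2 (by omega) b).mpr ?_
                  have hi : t - l < m - d := by omega
                  have := hcons (t - l) hi
                  have hUeq : U ⟨t - a, by omega⟩ = U ⟨t - l + d, by omega⟩ := by
                    congr 1
                    exact Fin.ext (by simp only [Fin.val_mk]; omega)
                  rw [hb, hUeq, this]
                · exact W_of_notin V (by omega) b
            · -- in window 2 only (t ≥ a + m)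
              apply cardBool_of_eq (V ⟨t - l, by omega⟩)
              intro b
              constructor
              · rintro ⟨_, h2⟩
                exact (W_iff_of_mem V (by omega) (by omega) b).mp h2
              · intro hb
                exact ⟨W_of_notin U (by omega) b,
                  (W_iff_of_mem V (by omega) (by omega) b).mpr hb⟩
          · rw [if_neg hmem]
            apply cardBool_of_true
            intro b
            exact ⟨W_of_notin U (by omega) b, W_of_notin V (by omega) b⟩
        rw [Finset.prod_congr rfl hg]
        apply prod_ite_one_two M _ (m + d)
        have : (Finset.range M).filter (fun t => a ≤ t ∧ t < a + (m + d))
            = Finset.Ico a (a + (m + d)) := by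
          ext t
          simp only [Finset.mem_filter, Finset.mem_range, Finset.mem_Ico]
          omega
        rw [this, Nat.card_Ico]
        omega
      · rw [if_neg hcons]
        push_neg at hcons
        obtain ⟨i, hi, hne⟩ := hcons
        apply Finset.prod_eq_zero (i := l + i) (by simp only [Finset.mem_range]; omega)
        apply cardBool_of_false
        rintro b ⟨h1, h2⟩
        have hb1 : b = U ⟨i + d, by omega⟩ := h1 ⟨i + d, by omega⟩ (by simp only [Fin.val_mk]; omega)
        have hb2 : b = V ⟨i, by omega⟩ := h2 ⟨i, by omega⟩ rfl
        exact hne (hb1 ▸ hb2)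
    · rw [if_neg hd0, if_neg hdm]
      have hg : ∀ t ∈ Finset.range M,
          Nat.card {b : Bool // W2 U V a l t b}
            = if (a ≤ t ∧ t < a + m) ∨ (l ≤ t ∧ t < l + m) then 1 else 2 := by
        intro t _
        by_cases hmem : (a ≤ t ∧ t < a + m) ∨ (l ≤ t ∧ t < l + m)
        · rw [if_pos hmem]
          rcases hmem with h1 | h2
          · apply cardBool_of_eq (U ⟨t - a, by omega⟩)
            intro b
            constructor
            · rintro ⟨hw, _⟩
              exact (W_iff_of_mem U h1.1 h1.2 b).mp hw
            · intro hb
              exact ⟨(W_iff_of_mem U h1.1 h1.2 b).mpr hb, W_of_notin V (by omega) b⟩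
          · apply cardBool_of_eq (V ⟨t - l, by omega⟩)
            intro b
            constructor
            · rintro ⟨_, hw⟩
              exact (W_iff_of_mem V h2.1 h2.2 b).mp hw
            · intro hb
              exact ⟨W_of_notin U (by omega) b, (W_iff_of_mem V h2.1 h2.2 b).mpr hb⟩
        · rw [if_neg hmem]
          push_neg at hmem
          apply cardBool_of_true
          intro b
          refine ⟨W_of_notin U ?_ b, W_of_notin V ?_ b⟩ <;>
            · rintro ⟨hc1, hc2⟩
              omega
      rw [Finset.prod_congr rfl hg]
      apply prod_ite_one_two M _ (2 * m)
      have : (Finset.range M).filter (fun t => (a ≤ t ∧ t < a + m) ∨ (l ≤ t ∧ t < l + m))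
          = Finset.Ico a (a + m) ∪ Finset.Ico l (l + m) := by
        ext t
        simp only [Finset.mem_filter, Finset.mem_range, Finset.mem_union, Finset.mem_Ico]
        omega
      rw [this, Finset.card_union_of_disjoint, Nat.card_Ico, Nat.card_Ico]
      · omega
      · rw [Finset.disjoint_left]
        intro t ht1 ht2
        simp only [Finset.mem_Ico] at ht1 ht2
        omega

lemma sum_tri (ψ : ℕ → ℝ) (L : ℕ) :
    (∑ k ∈ Finset.range L, ∑ l ∈ Finset.range L, if k ≤ l then ψ (l - k) else 0)
      = ∑ d ∈ Finset.range L, ((L - d : ℕ) : ℝ) * ψ d := by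
  induction L with
  | zero => simp
  | succ n ih =>
    simp only [Finset.sum_range_succ]
    rw [Finset.sum_add_distrib, ih]
    have e0 : (∑ l ∈ Finset.range n, if n ≤ l then ψ (l - n) else 0) = 0 :=
      Finset.sum_eq_zero (fun l hl => if_neg (by
        simp only [Finset.mem_range] at hl; omega))
    have e1 : (∑ k ∈ Finset.range n, if k ≤ n then ψ (n - k) else 0)
        = ∑ k ∈ Finset.range n, ψ (n - k) :=
      Finset.sum_congr rfl (fun k hk => if_pos (by
        simp only [Finset.mem_range] at hk; omega))
    have e2 : (∑ k ∈ Finset.range n, ψ (n - k)) + ψ 0 = ∑ d ∈ Finset.range (n+1), ψ d := by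
      have hr := Finset.sum_range_reflect ψ (n+1)
      simp only [Nat.add_sub_cancel] at hr
      rw [← hr, Finset.sum_range_succ, Nat.sub_self]
    have e3 : (∑ d ∈ Finset.range (n+1), ((n + 1 - d : ℕ) : ℝ) * ψ d)
        = (∑ d ∈ Finset.range n, ((n - d : ℕ) : ℝ) * ψ d) + ∑ d ∈ Finset.range (n+1), ψ d := by
      have step : ∀ d ∈ Finset.range (n+1),
          ((n + 1 - d : ℕ) : ℝ) * ψ d = ((n - d : ℕ) : ℝ) * ψ d + ψ d := by
        intro d hd
        simp only [Finset.mem_range] at hd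
        have : (n + 1 - d : ℕ) = (n - d) + 1 := by omega
        rw [this]
        push_cast
        ring
      rw [Finset.sum_congr rfl step, Finset.sum_add_distrib]
      congr 1
      rw [Finset.sum_range_succ, Nat.sub_self]
      simp
    rw [e0, e1, ← Finset.sum_range_succ (fun d => ((n + 1 - d : ℕ) : ℝ) * ψ d) n, e3, ← e2]
    simp only [Nat.sub_self, le_refl, if_pos]
    ring

noncomputable def psiM {m : ℕ} (T1 T2 : Fin m → Bool) (M d : ℕ) : ℝ :=
  if d = 0 then 0
  else if d < m then eMinus T1 T2 d * 2 ^ (M - (m + d))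
  else 2 ^ (M - 2 * m)

noncomputable def psiP {m : ℕ} (T1 T2 : Fin m → Bool) (M d : ℕ) : ℝ :=
  if d = 0 then 0
  else if d < m then ePlus T1 T2 d * 2 ^ (M - (m + d))
  else 2 ^ (M - 2 * m)

lemma single_sum {m M : ℕ} (T : Fin m → Bool) (k : ℕ) (hk : k + m ≤ M) :
    (∑ B : Fin M → Bool, if occursAt T B k then (1:ℝ) else 0) = 2 ^ (M - m) := by
  rw [sum_ind, singleCount T k hk]
  push_cast
  ring

lemma occCount_real {m M : ℕ} (T : Fin m → Bool) (B : Fin M → Bool) :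
    (occCount T B : ℝ)
      = ∑ k ∈ Finset.range (M + 1 - m), if occursAt T B k then (1:ℝ) else 0 := by
  rw [occCount, Finset.card_filter]
  push_cast
  exact Finset.sum_congr rfl (fun k _ => by split <;> simp)

lemma pair_sum {m M : ℕ} (T1 T2 : Fin m → Bool) (hT : T1 ≠ T2) (k l : ℕ)
    (hk : k + m ≤ M) (hl : l + m ≤ M) :
    (∑ B : Fin M → Bool, if occursAt T1 B k ∧ occursAt T2 B l then (1:ℝ) else 0)
      = (if k ≤ l then psiM T1 T2 M (l - k) else 0)
        + (if l ≤ k then psiP T1 T2 M (k - l) else 0) := by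
  rcases le_or_gt k l with hkl | hkl
  · rw [sum_ind]
    have hp := pairCount T1 T2 k (l - k) hT (show k + (l - k) + m ≤ M by omega)
    rw [show k + (l - k) = l by omega] at hp
    rw [hp, if_pos hkl]
    by_cases hd0 : l - k = 0
    · have hlk : l ≤ k := by omega
      rw [if_pos hd0, if_pos hlk]
      simp [psiM, psiP, hd0, show k - l = 0 by omega]
    · rw [if_neg hd0, if_neg (show ¬ l ≤ k by omega), add_zero]
      unfold psiM
      rw [if_neg hd0]
      by_cases hdm : l - k < m
      · rw [if_pos hdm, if_pos hdm]
        unfold eMinus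
        by_cases hcons : ∀ i : ℕ, ∀ h : i < m - (l - k),
            T1 ⟨i + (l - k), by omega⟩ = T2 ⟨i, by omega⟩
        · rw [if_pos hcons, if_pos hcons]
          push_cast
          ring
        · rw [if_neg hcons, if_neg hcons]
          simp
      · rw [if_neg hdm, if_neg hdm]
        push_cast
        ring
  · have hcomm : (∑ B : Fin M → Bool, if occursAt T1 B k ∧ occursAt T2 B l then (1:ℝ) else 0)
        = ∑ B : Fin M → Bool, if occursAt T2 B l ∧ occursAt T1 B k then (1:ℝ) else 0 := by
      refine Finset.sum_congr rfl (fun B _ => ?_)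
      by_cases h1 : occursAt T1 B k <;> by_cases h2 : occursAt T2 B l <;> simp [h1, h2]
    rw [hcomm, sum_ind]
    have hp := pairCount T2 T1 l (k - l) (Ne.symm hT) (show l + (k - l) + m ≤ M by omega)
    rw [show l + (k - l) = k by omega] at hp
    rw [hp]
    have hd0 : ¬ (k - l = 0) := by omega
    rw [if_neg hd0, if_neg (show ¬ k ≤ l by omega), if_pos (show l ≤ k by omega), zero_add]
    unfold psiP
    rw [if_neg hd0]
    by_cases hdm : k - l < m
    · rw [if_pos hdm, if_pos hdm]
      unfold ePlus
      by_cases hcons : ∀ i : ℕ, ∀ h : i < m - (k - l),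
          T1 ⟨i, by omega⟩ = T2 ⟨i + (k - l), by omega⟩
      · rw [if_pos (fun i hh => (hcons i hh).symm), if_pos hcons]
        push_cast
        ring
      · rw [if_neg (fun hc => hcons (fun i hh => (hc i hh).symm)), if_neg hcons]
        simp
    · rw [if_neg hdm, if_neg hdm]
      push_cast
      ring

lemma gauss_real (n : ℕ) : (∑ j ∈ Finset.range n, ((j:ℝ) + 1)) = n * (n + 1) / 2 := by
  induction n with
  | zero => simp
  | succ p ih =>
    rw [Finset.sum_range_succ, ih]
    push_cast
    ring

end NistCov

open NistCov in
theorem covariance_occCounts (m M : ℕ) (hm : 1 ≤ m) (T1 T2 : Fin m → Bool) (hT : T1 ≠ T2)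
    (hL : m ≤ M + 1 - m) :
    unifExp M (fun B => (occCount T1 B : ℝ) * (occCount T2 B : ℝ))
        - unifExp M (fun B => (occCount T1 B : ℝ)) * unifExp M (fun B => (occCount T2 B : ℝ))
      = (∑ d ∈ Finset.Icc 1 (m - 1),
          (((M : ℝ) - m + 1) - d) * (ePlus T1 T2 d + eMinus T1 T2 d) / 2 ^ (m + d))
        + ((((M : ℝ) - m + 1) - m) * (((M : ℝ) - m + 1) - m + 1) - ((M : ℝ) - m + 1) ^ 2)
            / 2 ^ (2 * m) := by
  set L := M + 1 - m with hLdef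
  have hkM : ∀ k, k < L → k + m ≤ M := by intro k hk; omega
  have hLcast : ((L : ℕ) : ℝ) = (M : ℝ) - m + 1 := by
    rw [hLdef, Nat.cast_sub (by omega)]
    push_cast
    ring
  -- single expectations
  have hE1 : ∀ T : Fin m → Bool, unifExp M (fun B => (occCount T B : ℝ)) = (L : ℝ) / 2 ^ m := by
    intro T
    unfold unifExp
    rw [Finset.sum_congr rfl (fun B _ => occCount_real T B), Finset.sum_comm]
    rw [Finset.sum_congr rfl
      (fun k hk => single_sum T k (hkM k (Finset.mem_range.mp hk)))]
    rw [Finset.sum_const, Finset.card_range, nsmul_eq_mul]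
    rw [div_eq_div_iff (by positivity) (by positivity)]
    have hp : (2:ℝ) ^ (M - m) * 2 ^ m = 2 ^ M := by
      rw [← pow_add]; congr 1; omega
    linear_combination (L:ℝ) * hp
  have hprod : unifExp M (fun B => (occCount T1 B : ℝ))
        * unifExp M (fun B => (occCount T2 B : ℝ)) = ((L:ℝ))^2 / 2 ^ (2*m) := by
    rw [hE1 T1, hE1 T2, div_mul_div_comm, ← pow_add]
    rw [show m + m = 2 * m by omega, sq]
  -- product expectation
  have hE12 : unifExp M (fun B => (occCount T1 B : ℝ) * (occCount T2 B : ℝ))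
      = (∑ d ∈ Finset.range L, ((L - d : ℕ) : ℝ)
          * (psiM T1 T2 M d + psiP T1 T2 M d)) / 2 ^ M := by
    unfold unifExp
    congr 1
    have step1 : ∀ B : Fin M → Bool, (occCount T1 B : ℝ) * (occCount T2 B : ℝ)
        = ∑ k ∈ Finset.range L, ∑ l ∈ Finset.range L,
            (if occursAt T1 B k ∧ occursAt T2 B l then (1:ℝ) else 0) := by
      intro B
      rw [occCount_real, occCount_real, Finset.sum_mul_sum]
      refine Finset.sum_congr rfl (fun k _ => Finset.sum_congr rfl (fun l _ => ?_))
      by_cases h1 : occursAt T1 B k <;> by_cases h2 : occursAt T2 B l <;> simp [h1, h2]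
    rw [Finset.sum_congr rfl (fun B _ => step1 B), Finset.sum_comm]
    have step2 : ∀ k ∈ Finset.range L,
        (∑ B : Fin M → Bool, ∑ l ∈ Finset.range L,
            (if occursAt T1 B k ∧ occursAt T2 B l then (1:ℝ) else 0))
        = ∑ l ∈ Finset.range L, ((if k ≤ l then psiM T1 T2 M (l - k) else 0)
            + (if l ≤ k then psiP T1 T2 M (k - l) else 0)) := by
      intro k hk
      rw [Finset.sum_comm]
      exact Finset.sum_congr rfl (fun l hl => pair_sum T1 T2 hT k l
        (hkM k (Finset.mem_range.mp hk)) (hkM l (Finset.mem_range.mp hl)))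
    rw [Finset.sum_congr rfl step2]
    simp only [Finset.sum_add_distrib]
    have t1 := sum_tri (psiM T1 T2 M) L
    have t2 : (∑ k ∈ Finset.range L, ∑ l ∈ Finset.range L,
        if l ≤ k then psiP T1 T2 M (k - l) else 0)
        = ∑ d ∈ Finset.range L, ((L - d : ℕ) : ℝ) * psiP T1 T2 M d := by
      rw [Finset.sum_comm]
      exact sum_tri (psiP T1 T2 M) L
    rw [t1, t2, ← Finset.sum_add_distrib]
    exact Finset.sum_congr rfl (fun d _ => by ring)
  rw [hE12, hprod]
  rw [Finset.range_eq_Ico, ← Finset.sum_Ico_consecutive _ (Nat.zero_le m) hL, add_div]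
  have hS1 : (∑ d ∈ Finset.Ico 0 m, ((L - d : ℕ) : ℝ)
        * (psiM T1 T2 M d + psiP T1 T2 M d)) / 2 ^ M
      = ∑ d ∈ Finset.Icc 1 (m - 1),
          (((M : ℝ) - m + 1) - d) * (ePlus T1 T2 d + eMinus T1 T2 d) / 2 ^ (m + d) := by
    rw [Finset.sum_eq_sum_Ico_succ_bot hm]
    have h0 : ((L - 0 : ℕ) : ℝ) * (psiM T1 T2 M 0 + psiP T1 T2 M 0) = 0 := by
      simp [psiM, psiP]
    rw [h0, zero_add]
    have hIcc : Finset.Icc 1 (m - 1) = Finset.Ico 1 m := by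
      rw [← Finset.Ico_add_one_right_eq_Icc]
      congr 1
      omega
    rw [hIcc, Finset.sum_div]
    refine Finset.sum_congr rfl (fun d hd => ?_)
    rw [Finset.mem_Ico] at hd
    unfold psiM psiP
    rw [if_neg (by omega), if_pos hd.2, if_neg (by omega), if_pos hd.2]
    have hcast : ((L - d : ℕ) : ℝ) = ((M:ℝ) - m + 1) - d := by
      rw [Nat.cast_sub (by omega), hLcast]
    rw [hcast]
    have hpow : (2:ℝ) ^ (M - (m + d)) * 2 ^ (m + d) = 2 ^ M := by
      rw [← pow_add]; congr 1; omega
    rw [div_eq_div_iff (by positivity) (by positivity)]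
    linear_combination (((M:ℝ) - m + 1) - d) * (ePlus T1 T2 d + eMinus T1 T2 d) * hpow
  have hS2 : (∑ d ∈ Finset.Ico m L, ((L - d : ℕ) : ℝ)
        * (psiM T1 T2 M d + psiP T1 T2 M d)) / 2 ^ M
      = (((M : ℝ) - m + 1) - m) * ((((M : ℝ) - m + 1) - m) + 1) / 2 ^ (2 * m) := by
    have hterm : ∀ d ∈ Finset.Ico m L, ((L - d : ℕ) : ℝ)
          * (psiM T1 T2 M d + psiP T1 T2 M d) / 2 ^ M
        = ((L - d : ℕ) : ℝ) * 2 / 2 ^ (2 * m) := by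
      intro d hd
      rw [Finset.mem_Ico] at hd
      unfold psiM psiP
      rw [if_neg (by omega), if_neg (by omega), if_neg (by omega), if_neg (by omega)]
      have hpow : (2:ℝ) ^ (M - 2 * m) * 2 ^ (2 * m) = 2 ^ M := by
        rw [← pow_add]; congr 1; omega
      rw [div_eq_div_iff (by positivity) (by positivity)]
      linear_combination ((L - d : ℕ) : ℝ) * 2 * hpow
    rw [Finset.sum_div, Finset.sum_congr rfl hterm, ← Finset.sum_div, ← Finset.sum_mul]
    have hgauss : (∑ d ∈ Finset.Ico m L, ((L - d : ℕ) : ℝ))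
        = ((L - m : ℕ) : ℝ) * (((L - m : ℕ) : ℝ) + 1) / 2 := by
      rw [Finset.sum_Ico_eq_sum_range]
      have hterm2 : ∀ j ∈ Finset.range (L - m), ((L - (m + j) : ℕ) : ℝ)
          = ((L - m - 1 - j : ℕ) : ℝ) + 1 := by
        intro j hj
        rw [Finset.mem_range] at hj
        rw [show L - (m + j) = (L - m - 1 - j) + 1 by omega]
        push_cast
        ring
      rw [Finset.sum_congr rfl hterm2,
        Finset.sum_range_reflect (fun j => ((j : ℕ) : ℝ) + 1) (L - m),
        gauss_real]
    rw [hgauss]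
    have hc : ((L - m : ℕ) : ℝ) = ((M : ℝ) - m + 1) - m := by
      rw [Nat.cast_sub hL, hLcast]
    rw [hc]
    ring
  rw [hS1, hS2, hLcast]
  ring
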